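/- Let R be a unital ring, n ≥ 2, and M a 2-torsion free Mₙ(R)-bimodule (not necessarily unital). Then every Jordan derivation D : Mₙ(R) → M is a derivation. -/

import Mathlib

/-- A (not necessarily unital) bimodule structure of a ring `A` on an
additive group `M`, given by a left action `l` and a right action `r`. -/
structure RingBimod (A M : Type*) [Ring A] [AddCommGroup M] where
  l : A → M → M
  r : M → A → M
  l_add : ∀ a m₁ m₂, l a (m₁ + m₂) = l a m₁ + l a m₂
  add_l : ∀ a₁ a₂ m, l (a₁ + a₂) m = l a₁ m + l a₂ m
  r_add : ∀ m₁ m₂ a, r (m₁ + m₂) a = r m₁ a + r m₂ a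
  add_r : ∀ m a₁ a₂, r m (a₁ + a₂) = r m a₁ + r m a₂
  mul_l : ∀ a₁ a₂ m, l (a₁ * a₂) m = l a₁ (l a₂ m)
  r_mul : ∀ m a₁ a₂, r m (a₁ * a₂) = r (r m a₁) a₂
  l_r : ∀ a₁ m a₂, l a₁ (r m a₂) = r (l a₁ m) a₂

namespace JD

variable {A M : Type*} [Ring A] [AddCommGroup M]

/-- left action as an AddMonoidHom in the module variable -/
def lh (bm : RingBimod A M) (a : A) : M →+ M := AddMonoidHom.mk' (bm.l a) (bm.l_add a)
def rh (bm : RingBimod A M) (a : A) : M →+ M :=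
  AddMonoidHom.mk' (fun m => bm.r m a) (fun m₁ m₂ => bm.r_add m₁ m₂ a)
def lm (bm : RingBimod A M) (m : M) : A →+ M :=
  AddMonoidHom.mk' (fun a => bm.l a m) (fun a b => bm.add_l a b m)
def rm (bm : RingBimod A M) (m : M) : A →+ M :=
  AddMonoidHom.mk' (bm.r m) (bm.add_r m)

variable (bm : RingBimod A M)

lemma l_zero (a : A) : bm.l a 0 = 0 := (lh bm a).map_zero
lemma r_zero (a : A) : bm.r 0 a = 0 := (rh bm a).map_zero
lemma zero_l (m : M) : bm.l 0 m = 0 := (lm bm m).map_zero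
lemma zero_r (m : M) : bm.r m 0 = 0 := (rm bm m).map_zero
lemma l_sub (a : A) (m₁ m₂ : M) : bm.l a (m₁ - m₂) = bm.l a m₁ - bm.l a m₂ :=
  (lh bm a).map_sub m₁ m₂
lemma r_sub (a : A) (m₁ m₂ : M) : bm.r (m₁ - m₂) a = bm.r m₁ a - bm.r m₂ a :=
  (rh bm a).map_sub m₁ m₂
lemma l_neg (a : A) (m : M) : bm.l a (-m) = -bm.l a m := (lh bm a).map_neg m
lemma r_neg (a : A) (m : M) : bm.r (-m) a = -bm.r m a := (rh bm a).map_neg m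
lemma l_sum {ι : Type*} (s : Finset ι) (a : A) (g : ι → M) :
    bm.l a (∑ i ∈ s, g i) = ∑ i ∈ s, bm.l a (g i) := map_sum (lh bm a) g s
lemma r_sum {ι : Type*} (s : Finset ι) (a : A) (g : ι → M) :
    bm.r (∑ i ∈ s, g i) a = ∑ i ∈ s, bm.r (g i) a := map_sum (rh bm a) g s
lemma sum_l {ι : Type*} (s : Finset ι) (g : ι → A) (m : M) :
    bm.l (∑ i ∈ s, g i) m = ∑ i ∈ s, bm.l (g i) m := map_sum (lm bm m) g s
lemma sum_r {ι : Type*} (s : Finset ι) (g : ι → A) (m : M) :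
    bm.r m (∑ i ∈ s, g i) = ∑ i ∈ s, bm.r m (g i) := map_sum (rm bm m) g s

lemma tf2 (htf : ∀ m : M, m + m = 0 → m = 0) {m m' : M} (h : m + m = m' + m') : m = m' := by
  have := htf (m - m') (by rw [sub_add_sub_comm, h, sub_self])
  exact sub_eq_zero.mp this

section Jordan
variable (D : A → M) (htf : ∀ m : M, m + m = 0 → m = 0)
  (hadd : ∀ a b, D (a + b) = D a + D b)
  (hJ : ∀ a b, D (a * b + b * a)
      = bm.r (D a) b + bm.l a (D b) + bm.r (D b) a + bm.l b (D a))

include htf hadd hJ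

lemma Dsq (a : A) : D (a * a) = bm.r (D a) a + bm.l a (D a) := by
  apply tf2 htf
  rw [← hadd]
  rw [hJ a a]
  abel

lemma H2 (a b : A) : D (a * b * a)
    = bm.r (D a) (b * a) + bm.l a (bm.r (D b) a) + bm.l (a * b) (D a) := by
  apply tf2 htf
  have e1 : a * (a * b + b * a) + (a * b + b * a) * a
      = (a * a * b + b * (a * a)) + (a * b * a + a * b * a) := by noncomm_ring
  have e2 := hJ a (a * b + b * a)
  rw [e1, hadd (a * a * b + b * (a * a)) (a * b * a + a * b * a), hJ (a*a) b,
    hadd (a*b*a) (a*b*a), hJ a b, Dsq bm D htf hadd hJ a] at e2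
  rw [eq_sub_of_add_eq' e2]
  simp only [bm.l_add, bm.add_l, bm.r_add, bm.add_r, bm.l_r, ← bm.mul_l, ← bm.r_mul,
    mul_assoc]
  abel
lemma H3 (a b c : A) : D (a * (b * c) + c * (b * a))
    = bm.r (D a) (b * c) + bm.l a (bm.r (D b) c) + bm.l (a * b) (D c)
      + bm.r (D c) (b * a) + bm.l c (bm.r (D b) a) + bm.l (c * b) (D a) := by
  have h := H2 bm D htf hadd hJ (a + c) b
  rw [show (a + c) * b * (a + c) = (a * b * a + c * b * c) + (a * (b * c) + c * (b * a)) by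
    noncomm_ring, hadd (a * b * a + c * b * c) (a * (b * c) + c * (b * a)),
    hadd (a * b * a) (c * b * c), H2 bm D htf hadd hJ a b, H2 bm D htf hadd hJ c b,
    hadd a c] at h
  rw [eq_sub_of_add_eq' h]
  simp only [mul_add, add_mul, bm.l_add, bm.add_l, bm.r_add, bm.add_r, bm.l_r,
    ← bm.mul_l, ← bm.r_mul, mul_assoc]
  abel

end Jordan

/-- the derivation defect -/
def del (bm : RingBimod A M) (D : A → M) (a b : A) : M :=
  D (a * b) - bm.r (D a) b - bm.l a (D b)

section Jordan2
variable (D : A → M) (htf : ∀ m : M, m + m = 0 → m = 0)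
  (hadd : ∀ a b, D (a + b) = D a + D b)
  (hJ : ∀ a b, D (a * b + b * a)
      = bm.r (D a) b + bm.l a (D b) + bm.r (D b) a + bm.l b (D a))
include htf hadd hJ

lemma K (a b c : A) : del bm D a (b * c) + bm.l a (del bm D b c)
    + del bm D (c * b) a + bm.r (del bm D c b) a = 0 := by
  have h := H3 bm D htf hadd hJ a b c
  rw [hadd (a * (b * c)) (c * (b * a))] at h
  unfold del
  simp only [mul_assoc]
  rw [eq_sub_of_add_eq h]
  simp only [mul_add, add_mul, l_sub, r_sub, bm.l_add, bm.add_l, bm.r_add, bm.add_r, bm.l_r,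
    ← bm.mul_l, ← bm.r_mul, mul_assoc]
  abel

end Jordan2

end JD

namespace JDM
open JD Matrix

variable {n : ℕ} {R : Type*} [Ring R]

/-- elementary matrix -/
def E (i j : Fin n) (x : R) : Matrix (Fin n) (Fin n) R := single i j x
/-- diagonal matrix unit -/
def f (p : Fin n) : Matrix (Fin n) (Fin n) R := E p p (1 : R)

lemma E_mul_same (i j k : Fin n) (x y : R) : E i j x * E j k y = E i k (x * y) := by
  unfold E; rw [single_mul_single_same]
lemma E_mul_ne {j k : Fin n} (h : j ≠ k) (i l : Fin n) (x y : R) : E i j x * E k l y = 0 := by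
  unfold E; rw [single_mul_single_of_ne (h := h)]
lemma f_mul_E (i j : Fin n) (x : R) : f i * E i j x = E i j x := by
  unfold f; rw [E_mul_same, one_mul]
lemma E_mul_f (i j : Fin n) (x : R) : E i j x * f j = E i j x := by
  unfold f; rw [E_mul_same, mul_one]
lemma f_mul_E_ne {p i : Fin n} (h : p ≠ i) (j : Fin n) (x : R) : f p * E i j x = 0 :=
  E_mul_ne h p j 1 x
lemma E_mul_f_ne {j q : Fin n} (h : j ≠ q) (i : Fin n) (x : R) : E i j x * f q = 0 :=
  E_mul_ne h i q x 1
lemma f_mul_f (p : Fin n) : (f p : Matrix (Fin n) (Fin n) R) * f p = f p := E_mul_f p p 1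
lemma f_mul_f_ne {p q : Fin n} (h : p ≠ q) : (f p : Matrix (Fin n) (Fin n) R) * f q = 0 := f_mul_E_ne h q 1

lemma one_eq : (1 : Matrix (Fin n) (Fin n) R) = ∑ p, f p := by
  ext i j
  rw [Matrix.sum_apply]
  by_cases h : i = j
  · subst h
    rw [Matrix.one_apply_eq]
    rw [Finset.sum_eq_single i (fun p _ hp => by
      simp [f, E, Matrix.single, hp]) (by simp)]
    simp [f, E, Matrix.single]
  · rw [Matrix.one_apply_ne h]
    refine (Finset.sum_eq_zero fun p _ => ?_).symm
    simp only [f, E, Matrix.single, Matrix.of_apply]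
    rw [if_neg]
    rintro ⟨rfl, rfl⟩
    exact h rfl

section Core
variable {M : Type*} [AddCommGroup M]
  (bm : RingBimod (Matrix (Fin n) (Fin n) R) M)
  (D : Matrix (Fin n) (Fin n) R → M)
  (htf : ∀ m : M, m + m = 0 → m = 0)
  (hadd : ∀ a b, D (a + b) = D a + D b)
  (hJ : ∀ a b, D (a * b + b * a)
      = bm.r (D a) b + bm.l a (D b) + bm.r (D b) a + bm.l b (D a))
  (hU1 : ∀ a, bm.l 1 (D a) = D a)
  (hU2 : ∀ a, bm.r (D a) 1 = D a)
  (hF : ∀ p : Fin n, D (f p) = 0)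

/-- sandwich computation -/
lemma sand (a b c d : Matrix (Fin n) (Fin n) R) (m : M) :
    bm.l a (bm.r (bm.l b (bm.r m c)) d) = bm.l (a * b) (bm.r m (c * d)) := by
  simp only [bm.l_r, ← bm.r_mul, ← bm.mul_l]

section withJ
include htf hadd hJ hF

lemma star (p q : Fin n) (b : Matrix (Fin n) (Fin n) R) :
    D (f p * b * f q + f q * b * f p)
      = bm.l (f p) (bm.r (D b) (f q)) + bm.l (f q) (bm.r (D b) (f p)) := by
  have h := H3 bm D htf hadd hJ (f p) b (f q)
  rw [hF p, hF q] at h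
  simpa [r_zero, l_zero, mul_assoc] using h

lemma sqr (p : Fin n) (b : Matrix (Fin n) (Fin n) R) :
    D (f p * b * f p) = bm.l (f p) (bm.r (D b) (f p)) := by
  have h := H2 bm D htf hadd hJ (f p) b
  rw [hF p] at h
  simpa [r_zero, l_zero] using h

lemma beta {i j : Fin n} (hij : i ≠ j) (x : R) :
    bm.l (f j) (bm.r (D (E i j x)) (f i)) = 0 := by
  have h := H2 bm D htf hadd hJ (E i j 1) (E j i x)
  simp only [E_mul_same, one_mul, mul_one] at h
  have t1 : bm.l (f j) (bm.r (bm.r (D (E i j 1)) (E j j x)) (f i)) = 0 := by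
    rw [← bm.r_mul, E_mul_f_ne (Ne.symm hij), zero_r, l_zero]
  have t2 : bm.l (f j) (bm.r (bm.l (E i j 1) (bm.r (D (E j i x)) (E i j 1))) (f i)) = 0 := by
    rw [← bm.l_r, ← bm.mul_l, f_mul_E_ne (Ne.symm hij), zero_l]
  have t3 : bm.l (f j) (bm.r (bm.l (E i i x) (D (E i j 1))) (f i)) = 0 := by
    rw [← bm.l_r, ← bm.mul_l, f_mul_E_ne (Ne.symm hij), zero_l]
  rw [h, bm.r_add, bm.r_add, bm.l_add, bm.l_add, t1, t2, t3]
  abel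

include hU1 hU2

lemma comp (i j : Fin n) (x : R) :
    D (E i j x) = bm.l (f i) (bm.r (D (E i j x)) (f j)) := by
  have hD0 : D 0 = 0 := by
    have := hadd 0 0
    rw [add_zero] at this
    exact add_eq_left.mp this.symm
  have hz : ∀ p q : Fin n, ¬(p = i ∧ q = j) → bm.l (f p) (bm.r (D (E i j x)) (f q)) = 0 := by
    intro p q hpq
    by_cases hpq' : p = q
    · subst hpq'
      have h := sqr bm D htf hadd hJ hF p (E i j x)
      by_cases hpi : p = i
      · subst hpi
        have hpj : p ≠ j := fun hh => hpq ⟨rfl, hh⟩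
        rw [f_mul_E, E_mul_f_ne (Ne.symm hpj), hD0] at h
        exact h.symm
      · rw [f_mul_E_ne hpi, zero_mul, hD0] at h
        exact h.symm
    · by_cases h2 : p = j ∧ q = i
      · obtain ⟨rfl, rfl⟩ := h2
        exact beta bm D htf hadd hJ hF (Ne.symm hpq') x
      · have harg1 : f p * E i j x * f q = 0 := by
          by_cases hpi : p = i
          · subst hpi
            have hqj : q ≠ j := fun hh => hpq ⟨rfl, hh⟩
            rw [f_mul_E, E_mul_f_ne (Ne.symm hqj)]
          · rw [f_mul_E_ne hpi, zero_mul]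
        have harg2 : f q * E i j x * f p = 0 := by
          by_cases hqi : q = i
          · subst hqi
            have hpj : p ≠ j := fun hh => h2 ⟨hh, rfl⟩
            rw [f_mul_E, E_mul_f_ne (Ne.symm hpj)]
          · rw [f_mul_E_ne hqi, zero_mul]
        have h := star bm D htf hadd hJ hF p q (E i j x)
        rw [harg1, harg2, add_zero, hD0] at h
        have h3 := congrArg (fun z => bm.l (f p) (bm.r z (f q))) h.symm
        simp only [bm.r_add, bm.l_add] at h3
        rw [sand, sand, f_mul_f, f_mul_f, f_mul_f_ne hpq', zero_l, add_zero,
          r_zero, l_zero] at h3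
        exact h3
  have hdec : D (E i j x) = ∑ p, ∑ q, bm.l (f p) (bm.r (D (E i j x)) (f q)) := by
    conv_lhs => rw [← hU1 (E i j x), ← hU2 (E i j x)]
    rw [one_eq, sum_l]
    refine Finset.sum_congr rfl fun p _ => ?_
    rw [sum_r, l_sum]
  refine hdec.trans ?_
  rw [Finset.sum_eq_single i
    (fun p _ hp => Finset.sum_eq_zero fun q _ => hz p q fun hh => hp hh.1)
    (fun h => absurd (Finset.mem_univ i) h)]
  rw [Finset.sum_eq_single j
    (fun q _ hq => hz i q fun hh => hq hh.2)
    (fun h => absurd (Finset.mem_univ j) h)]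

lemma rDu (i j : Fin n) (x : R) (v : Matrix (Fin n) (Fin n) R) :
    bm.r (D (E i j x)) v = bm.l (f i) (bm.r (D (E i j x)) (f j * v)) := by
  conv_lhs => rw [comp bm D htf hadd hJ hU1 hU2 hF i j x]
  rw [← bm.l_r, ← bm.r_mul]

lemma lDv (k l : Fin n) (y : R) (u : Matrix (Fin n) (Fin n) R) :
    bm.l u (D (E k l y)) = bm.r (bm.l (u * f k) (D (E k l y))) (f l) := by
  conv_lhs => rw [comp bm D htf hadd hJ hU1 hU2 hF k l y]
  rw [← bm.mul_l, bm.l_r]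

lemma D_zero' : D 0 = 0 := by
  have := hadd 0 0
  rw [add_zero] at this
  exact add_eq_left.mp this.symm

lemma caseA {j k : Fin n} (hjk : j ≠ k) (i l : Fin n) (x y : R) :
    del bm D (E i j x) (E k l y) = 0 := by
  have h1 : bm.r (D (E i j x)) (E k l y) = 0 := by
    rw [rDu bm D htf hadd hJ hU1 hU2 hF i j x, f_mul_E_ne hjk, zero_r, l_zero]
  have h2 : bm.l (E i j x) (D (E k l y)) = 0 := by
    rw [lDv bm D htf hadd hJ hU1 hU2 hF k l y, E_mul_f_ne hjk, zero_l, r_zero]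
  unfold del
  rw [E_mul_ne hjk, D_zero' bm D htf hadd hJ hU1 hU2 hF, h1, h2]
  abel

lemma caseB {l i : Fin n} (hli : l ≠ i) (j : Fin n) (x y : R) :
    del bm D (E i j x) (E j l y) = 0 := by
  have h := hJ (E i j x) (E j l y)
  rw [E_mul_ne hli j j y x, add_zero] at h
  have h3 : bm.r (D (E j l y)) (E i j x) = 0 := by
    rw [rDu bm D htf hadd hJ hU1 hU2 hF j l y, f_mul_E_ne hli, zero_r, l_zero]
  have h4 : bm.l (E j l y) (D (E i j x)) = 0 := by
    rw [lDv bm D htf hadd hJ hU1 hU2 hF i j x, E_mul_f_ne hli j y, zero_l, r_zero]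
  rw [h3, h4, add_zero, add_zero] at h
  unfold del
  rw [h]
  abel

lemma caseC {i j : Fin n} (hij : i ≠ j) (x y : R) :
    del bm D (E i j x) (E j i y) = 0 := by
  have h := hJ (E i j x) (E j i y)
  rw [E_mul_same, E_mul_same, hadd (E i i (x * y)) (E j j (y * x))] at h
  have h2 := congrArg (fun z => bm.l (f i) (bm.r z (f i))) h
  simp only [bm.l_add, bm.r_add] at h2
  have c1 : bm.l (f i) (bm.r (D (E i i (x * y))) (f i)) = D (E i i (x * y)) :=
    (comp bm D htf hadd hJ hU1 hU2 hF i i (x * y)).symm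
  have c2 : bm.l (f i) (bm.r (D (E j j (y * x))) (f i)) = 0 := by
    conv_lhs => rw [comp bm D htf hadd hJ hU1 hU2 hF j j (y * x)]
    rw [sand, f_mul_f_ne hij, zero_l]
  have c3 : bm.l (f i) (bm.r (bm.r (D (E i j x)) (E j i y)) (f i))
      = bm.r (D (E i j x)) (E j i y) := by
    rw [rDu bm D htf hadd hJ hU1 hU2 hF i j x (E j i y), f_mul_E, sand, f_mul_f, E_mul_f]
  have c4 : bm.l (f i) (bm.r (bm.l (E i j x) (D (E j i y))) (f i))
      = bm.l (E i j x) (D (E j i y)) := by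
    rw [lDv bm D htf hadd hJ hU1 hU2 hF j i y (E i j x), E_mul_f, ← bm.r_mul, f_mul_f,
      bm.l_r, ← bm.mul_l, f_mul_E]
  have c5 : bm.l (f i) (bm.r (bm.r (D (E j i y)) (E i j x)) (f i)) = 0 := by
    rw [rDu bm D htf hadd hJ hU1 hU2 hF j i y (E i j x), f_mul_E, sand, f_mul_f_ne hij, zero_l]
  have c6 : bm.l (f i) (bm.r (bm.l (E j i y) (D (E i j x))) (f i)) = 0 := by
    rw [lDv bm D htf hadd hJ hU1 hU2 hF i j x (E j i y), E_mul_f, ← bm.r_mul,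
      f_mul_f_ne (Ne.symm hij), zero_r, l_zero]
  rw [c1, c2, c3, c4, c5, c6] at h2
  have hfin : D (E i i (x * y))
      = bm.r (D (E i j x)) (E j i y) + bm.l (E i j x) (D (E j i y)) := by
    simpa using h2
  unfold del
  rw [E_mul_same, hfin]
  abel

lemma caseD (hn : 2 ≤ n) (i : Fin n) (x y : R) :
    del bm D (E i i x) (E i i y) = 0 := by
  haveI : Nontrivial (Fin n) := Fin.nontrivial_iff_two_le.mpr hn
  obtain ⟨j, hj⟩ := exists_ne i
  have hK := K bm D htf hadd hJ (E i i x) (E i j y) (E j i 1)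
  simp only [E_mul_same, mul_one, one_mul] at hK
  rw [caseC bm D htf hadd hJ hU1 hU2 hF (Ne.symm hj) y 1,
    caseA bm D htf hadd hJ hU1 hU2 hF hj j i y x,
    caseC bm D htf hadd hJ hU1 hU2 hF hj 1 y] at hK
  rw [l_zero, r_zero, add_zero, add_zero, add_zero] at hK
  exact hK

lemma delE (hn : 2 ≤ n) (i j k l : Fin n) (x y : R) :
    del bm D (E i j x) (E k l y) = 0 := by
  by_cases hjk : j = k
  · subst hjk
    by_cases hli : l = i
    · subst hli
      by_cases hij : l = j
      · subst hij
        exact caseD bm D htf hadd hJ hU1 hU2 hF hn l x y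
      · exact caseC bm D htf hadd hJ hU1 hU2 hF hij x y
    · exact caseB bm D htf hadd hJ hU1 hU2 hF hli j x y
  · exact caseA bm D htf hadd hJ hU1 hU2 hF hjk i l x y

theorem core (hn : 2 ≤ n) : ∀ a b, D (a * b) = bm.r (D a) b + bm.l a (D b) := by
  have hL : ∀ b a a', del bm D (a + a') b = del bm D a b + del bm D a' b := by
    intro b a a'
    unfold del
    rw [add_mul, hadd, hadd, bm.r_add, bm.add_l]
    abel
  have hR : ∀ a b b', del bm D a (b + b') = del bm D a b + del bm D a b' := by
    intro a b b'
    unfold del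
    rw [mul_add, hadd, hadd, bm.add_r, bm.l_add]
    abel
  have hdel : ∀ a b, del bm D a b = 0 := by
    intro a b
    have key : ∀ (F : Matrix (Fin n) (Fin n) R →+ M) (c : Matrix (Fin n) (Fin n) R),
        F c = ∑ p, ∑ q, F (single p q (c p q)) := by
      intro F c
      conv_lhs => rw [matrix_eq_sum_single c]
      rw [map_sum]
      exact Finset.sum_congr rfl fun p _ => map_sum F _ _
    let F : Matrix (Fin n) (Fin n) R →+ M :=
      AddMonoidHom.mk' (fun a' => del bm D a' b) (fun a1 a2 => hL b a1 a2)
    have e1 : del bm D a b = ∑ p, ∑ q, del bm D (E p q (a p q)) b := key F a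
    rw [e1]
    refine Finset.sum_eq_zero fun p _ => Finset.sum_eq_zero fun q _ => ?_
    let G : Matrix (Fin n) (Fin n) R →+ M :=
      AddMonoidHom.mk' (del bm D (E p q (a p q))) (hR (E p q (a p q)))
    have e2 : del bm D (E p q (a p q)) b
        = ∑ k, ∑ l, del bm D (E p q (a p q)) (E k l (b k l)) := key G b
    rw [e2]
    exact Finset.sum_eq_zero fun k _ => Finset.sum_eq_zero fun l _ =>
      delE bm D htf hadd hJ hU1 hU2 hF hn p q k l (a p q) (b k l)
  intro a b
  have h := hdel a b
  unfold del at h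
  rw [sub_sub, sub_eq_zero] at h
  exact h

end withJ

section noF
include htf hadd hJ hU1 hU2

theorem unital (hn : 2 ≤ n) : ∀ a b, D (a * b) = bm.r (D a) b + bm.l a (D b) := by
  classical
  set m₀ : M := ∑ p, bm.r (D (f p)) (f p) with hm₀def
  set D' : Matrix (Fin n) (Fin n) R → M := fun a => D a + bm.l a m₀ - bm.r m₀ a with hD'def
  have hD0 : D 0 = 0 := by
    have := hadd 0 0
    rw [add_zero] at this
    exact add_eq_left.mp this.symm
  have hm₀1 : bm.l 1 m₀ = m₀ := by
    rw [hm₀def, l_sum]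
    refine Finset.sum_congr rfl fun p _ => ?_
    rw [bm.l_r, hU1]
  have hm₀2 : bm.r m₀ 1 = m₀ := by
    rw [hm₀def, r_sum]
    refine Finset.sum_congr rfl fun p _ => ?_
    rw [← bm.r_mul, mul_one]
  have hadd' : ∀ a b, D' (a + b) = D' a + D' b := by
    intro a b
    simp only [hD'def, hadd, bm.add_l, bm.add_r]
    abel
  have hJ' : ∀ a b, D' (a * b + b * a)
      = bm.r (D' a) b + bm.l a (D' b) + bm.r (D' b) a + bm.l b (D' a) := by
    intro a b
    simp only [hD'def]
    rw [hJ a b]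
    simp only [l_sub, r_sub, bm.l_add, bm.add_l, bm.r_add, bm.add_r, mul_add, add_mul,
      bm.l_r, ← bm.r_mul, ← bm.mul_l]
    abel
  have hU1' : ∀ a, bm.l 1 (D' a) = D' a := by
    intro a
    simp only [hD'def, l_sub, bm.l_add, hU1, ← bm.mul_l, one_mul, bm.l_r, hm₀1]
  have hU2' : ∀ a, bm.r (D' a) 1 = D' a := by
    intro a
    simp only [hD'def, r_sub, bm.r_add, hU2, ← bm.r_mul, mul_one, ← bm.l_r, hm₀2]
  have idem1 : ∀ q, D (f q) = bm.r (D (f q)) (f q) + bm.l (f q) (D (f q)) := by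
    intro q
    apply tf2 htf
    have h := hJ (f q) (f q)
    rw [f_mul_f, hadd] at h
    rw [h]
    abel
  have idem2 : ∀ q, bm.l (f q) (bm.r (D (f q)) (f q)) = 0 := by
    intro q
    have h := congrArg (fun z => bm.l (f q) (bm.r z (f q))) (idem1 q)
    simp only [bm.r_add, bm.l_add] at h
    rw [← bm.r_mul, f_mul_f, ← bm.l_r, ← bm.mul_l, f_mul_f] at h
    exact left_eq_add.mp h
  have orth : ∀ p q : Fin n, p ≠ q →
      bm.l (f q) (bm.r (D (f q)) (f p)) + bm.l (f q) (bm.r (D (f p)) (f p)) = 0 := by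
    intro p q hpq
    have h := hJ (f p) (f q)
    rw [f_mul_f_ne hpq, f_mul_f_ne (Ne.symm hpq), add_zero, hD0] at h
    have h2 := congrArg (fun z => bm.l (f q) (bm.r z (f p))) h.symm
    simp only [bm.r_add, bm.l_add] at h2
    have t1 : bm.l (f q) (bm.r (bm.r (D (f p)) (f q)) (f p)) = 0 := by
      rw [← bm.r_mul, f_mul_f_ne (Ne.symm hpq), zero_r, l_zero]
    have t2 : bm.l (f q) (bm.r (bm.l (f p) (D (f q))) (f p)) = 0 := by
      rw [← bm.l_r, ← bm.mul_l, f_mul_f_ne (Ne.symm hpq), zero_l]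
    have t3 : bm.l (f q) (bm.r (bm.r (D (f q)) (f p)) (f p))
        = bm.l (f q) (bm.r (D (f q)) (f p)) := by
      rw [← bm.r_mul, f_mul_f]
    have t4 : bm.l (f q) (bm.r (bm.l (f q) (D (f p))) (f p))
        = bm.l (f q) (bm.r (D (f p)) (f p)) := by
      rw [← bm.l_r, ← bm.mul_l, f_mul_f]
    rw [t1, t2, t3, t4, zero_add, zero_add, r_zero, l_zero] at h2
    exact h2
  have hF' : ∀ q, D' (f q) = 0 := by
    intro q
    have step1 : bm.r m₀ (f q) = bm.r (D (f q)) (f q) := by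
      rw [hm₀def, r_sum]
      rw [Finset.sum_eq_single q (fun p _ hp => by
          rw [← bm.r_mul, f_mul_f_ne hp, zero_r])
        (fun h => absurd (Finset.mem_univ q) h)]
      rw [← bm.r_mul, f_mul_f]
    have step2 : bm.l (f q) m₀ = - bm.l (f q) (D (f q)) := by
      have hsum : bm.l (f q) m₀ + bm.l (f q) (D (f q)) = 0 := by
        have e1 : bm.l (f q) (D (f q)) = ∑ p, bm.l (f q) (bm.r (D (f q)) (f p)) := by
          conv_lhs => rw [← hU2 (f q)]
          rw [one_eq, sum_r, l_sum]
        rw [hm₀def, l_sum, e1, ← Finset.sum_add_distrib]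
        refine Finset.sum_eq_zero fun p _ => ?_
        by_cases hpq : p = q
        · subst hpq
          rw [idem2, zero_add]
        · rw [add_comm]
          exact orth p q hpq
      exact eq_neg_of_add_eq_zero_left hsum
    have : D' (f q) = D (f q) + bm.l (f q) m₀ - bm.r m₀ (f q) := rfl
    rw [this, step1, step2]
    nth_rewrite 1 [idem1 q]
    abel
  have hcore := core bm D' htf hadd' hJ' hU1' hU2' hF' hn
  intro a b
  have h := hcore a b
  have hb : D' (a * b) = D (a * b) + bm.l (a * b) m₀ - bm.r m₀ (a * b) := rfl
  have hba : D' a = D a + bm.l a m₀ - bm.r m₀ a := rfl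
  have hbb : D' b = D b + bm.l b m₀ - bm.r m₀ b := rfl
  rw [hb, hba, hbb] at h
  simp only [l_sub, r_sub, bm.l_add, bm.r_add, bm.l_r, ← bm.r_mul, ← bm.mul_l] at h
  have h2 : D (a * b) = (D (a * b) + bm.l (a * b) m₀ - bm.r m₀ (a * b))
      + (bm.r m₀ (a * b) - bm.l (a * b) m₀) := by abel
  rw [h2, h]
  abel

end noF
end Core

end JDM



theorem stmt11 (R : Type*) [Ring R] (n : ℕ) (hn : 2 ≤ n)
    (M : Type*) [AddCommGroup M] (bm : RingBimod (Matrix (Fin n) (Fin n) R) M)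
    (htf : ∀ m : M, m + m = 0 → m = 0)
    (D : Matrix (Fin n) (Fin n) R → M)
    (hadd : ∀ A B, D (A + B) = D A + D B)
    (hJ : ∀ A B, D (A * B + B * A)
        = bm.r (D A) B + bm.l A (D B) + bm.r (D B) A + bm.l B (D A)) :
    ∀ A B, D (A * B) = bm.r (D A) B + bm.l A (D B) := by
  open JD JDM in
  set P : M → M := fun m => bm.l 1 (bm.r m 1) with hPdef
  have hPr : ∀ (m : M) c, P (bm.r m c) = bm.l 1 (bm.r m c) := by
    intro m c
    simp only [hPdef]
    rw [← bm.r_mul, mul_one]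
  have hPr2 : ∀ (m : M) c, bm.r (P m) c = bm.l 1 (bm.r m c) := by
    intro m c
    simp only [hPdef]
    rw [← bm.l_r, ← bm.r_mul, one_mul]
  have hPl : ∀ (m : M) c, P (bm.l c m) = bm.l c (bm.r m 1) := by
    intro m c
    simp only [hPdef]
    rw [← bm.l_r, ← bm.mul_l, one_mul]
  have hPl2 : ∀ (m : M) c, bm.l c (P m) = bm.l c (bm.r m 1) := by
    intro m c
    simp only [hPdef]
    rw [← bm.mul_l, mul_one]
  have hP1l : ∀ m : M, bm.l 1 (P m) = P m := fun m => hPl2 m 1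
  have Padd : ∀ m m' : M, P (m + m') = P m + P m' := by
    intro m m'
    simp only [hPdef]
    rw [bm.r_add, bm.l_add]
  have hadd1 : ∀ a b, P (D (a + b)) = P (D a) + P (D b) := by
    intro a b
    rw [hadd, Padd]
  have hJ1 : ∀ a b, P (D (a * b + b * a))
      = bm.r (P (D a)) b + bm.l a (P (D b)) + bm.r (P (D b)) a + bm.l b (P (D a)) := by
    intro a b
    rw [hJ a b, Padd, Padd, Padd]
    simp only [hPr, hPl, hPr2, hPl2]
  have hU1a : ∀ a, bm.l 1 (P (D a)) = P (D a) := fun a => hP1l (D a)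
  have hU2a : ∀ a, bm.r (P (D a)) 1 = P (D a) := fun a => hPr2 (D a) 1
  have hder : ∀ a b, P (D (a * b)) = bm.r (P (D a)) b + bm.l a (P (D b)) :=
    JDM.unital bm (fun c => P (D c)) htf hadd1 hJ1 hU1a hU2a hn
  set q10 : M → M := fun m => bm.l 1 m - P m with hq10def
  set q01 : M → M := fun m => bm.r m 1 - P m with hq01def
  set q00 : M → M := fun m => m - bm.l 1 m - bm.r m 1 + P m with hq00def
  have hdecomp : ∀ m : M, m = P m + q10 m + q01 m + q00 m := by
    intro m
    simp only [hq10def, hq01def, hq00def]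
    abel
  have q10r : ∀ (m : M) c, q10 (bm.r m c) = 0 := by
    intro m c
    simp only [hq10def]
    rw [hPr, sub_self]
  have q10l : ∀ (m : M) c, q10 (bm.l c m) = bm.l c (q10 m) := by
    intro m c
    simp only [hq10def]
    simp only [hPl, l_sub, hPl2, ← bm.mul_l, one_mul, mul_one]
  have q01l : ∀ (m : M) c, q01 (bm.l c m) = 0 := by
    intro m c
    simp only [hq01def]
    rw [hPl, bm.l_r, sub_self]
  have q01r : ∀ (m : M) c, q01 (bm.r m c) = bm.r (q01 m) c := by
    intro m c
    simp only [hq01def]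
    simp only [hPr, r_sub, hPr2, ← bm.r_mul, one_mul, mul_one]
  have q00l : ∀ (m : M) c, q00 (bm.l c m) = 0 := by
    intro m c
    simp only [hq00def, hPl]
    rw [← bm.mul_l, one_mul, ← bm.l_r]
    abel
  have q00r : ∀ (m : M) c, q00 (bm.r m c) = 0 := by
    intro m c
    simp only [hq00def, hPr]
    rw [← bm.r_mul, mul_one]
    abel
  have Kr10 : ∀ (m : M) c, bm.r (q10 m) c = 0 := by
    intro m c
    simp only [hq10def]
    rw [r_sub, hPr2, bm.l_r, sub_self]
  have Kl01 : ∀ (m : M) c, bm.l c (q01 m) = 0 := by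
    intro m c
    simp only [hq01def]
    rw [l_sub, hPl2, sub_self]
  have q10add : ∀ m m' : M, q10 (m + m') = q10 m + q10 m' := by
    intro m m'
    simp only [hq10def]
    rw [bm.l_add, Padd]
    abel
  have q01add : ∀ m m' : M, q01 (m + m') = q01 m + q01 m' := by
    intro m m'
    simp only [hq01def]
    rw [bm.r_add, Padd]
    abel
  have q00add : ∀ m m' : M, q00 (m + m') = q00 m + q00 m' := by
    intro m m'
    simp only [hq00def]
    rw [bm.l_add, bm.r_add, Padd]
    abel
  have q10one : ∀ m : M, q10 (bm.l 1 m) = q10 m := by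
    intro m
    rw [q10l]
    simp only [hq10def]
    rw [l_sub, ← bm.mul_l, one_mul, hPl2]
  have q00one : ∀ m : M, q00 (bm.l 1 m) = 0 := fun m => q00l m 1
  -- structure of the 1-0 component of D
  have h10 : ∀ c, q10 (D c) = bm.l c (q10 (D 1)) := by
    intro c
    have h := hJ c 1
    rw [mul_one, one_mul, hadd] at h
    have h2 := congrArg q10 h
    rw [q10add, q10add, q10add, q10add, q10r, q10r, q10l, q10one] at h2
    rw [zero_add, add_zero] at h2
    exact add_right_cancel h2
  have q01one : ∀ m : M, bm.r (q01 m) 1 = q01 m := by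
    intro m
    simp only [hq01def]
    rw [r_sub, hPr2, ← bm.r_mul, one_mul]
  have h01 : ∀ c, q01 (D c) = bm.r (q01 (D 1)) c := by
    intro c
    have h := hJ c 1
    rw [mul_one, one_mul, hadd] at h
    have h2 := congrArg q01 h
    rw [q01add, q01add, q01add, q01add, q01r, q01l, q01r, q01l] at h2
    rw [add_zero, add_zero] at h2
    rw [q01one] at h2
    exact add_left_cancel h2
  have h00 : ∀ c, q00 (D c) = 0 := by
    intro c
    have h := hJ c 1
    rw [mul_one, one_mul, hadd] at h
    have h2 := congrArg q00 h
    rw [q00add, q00add, q00add, q00add, q00r, q00l, q00r, q00l] at h2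
    rw [add_zero, add_zero, add_zero] at h2
    exact htf _ h2
  intro a b
  have L1 : q10 (D (a * b)) = bm.l a (q10 (D b)) := by
    rw [h10 (a * b), bm.mul_l, ← h10 b]
  have L2 : q01 (D (a * b)) = bm.r (q01 (D a)) b := by
    rw [h01 (a * b), bm.r_mul, ← h01 a]
  have key := hdecomp (D (a * b))
  rw [L1, L2, h00 (a * b), add_zero, hder a b] at key
  have ra : bm.r (D a) b = bm.r (P (D a)) b + bm.r (q01 (D a)) b := by
    conv_lhs => rw [hdecomp (D a)]
    rw [bm.r_add, bm.r_add, bm.r_add, Kr10, h00 a, r_zero, add_zero, add_zero]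
  have lb : bm.l a (D b) = bm.l a (P (D b)) + bm.l a (q10 (D b)) := by
    conv_lhs => rw [hdecomp (D b)]
    rw [bm.l_add, bm.l_add, bm.l_add, Kl01, h00 b, l_zero, add_zero, add_zero]
  rw [ra, lb, key]
  abel
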